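/- Let f_i: ℝ^p → ℝ for i = 1,…,n each be μ-strongly convex and differentiable with L-Lipschitz gradient (L ≥ μ > 0), and δ ∈ (0,1]. Suppose d_i is a function with d_i ≤ f_i pointwise. Define d_i'(x) = (1−δ)d_i(x) + δ[f_i(z) + ⟨∇f_i(z), x−z⟩ + (μ/2)‖x−z‖²] for a given z ∈ ℝ^p. Then for all x: d_i'(x) ≥ d_i(x) − (δ(L−μ)/2)‖x − z‖². -/

import Mathlib

open scoped RealInnerProductSpace

theorem miso_lower_bound_maintenance
    {pdim : ℕ} (f : EuclideanSpace ℝ (Fin pdim) → ℝ)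
    (f' : EuclideanSpace ℝ (Fin pdim) → EuclideanSpace ℝ (Fin pdim))
    (μ L δ : ℝ) (hμ : 0 < μ) (hL : μ ≤ L) (hδ : δ ∈ Set.Ioc (0 : ℝ) 1)
    (hgrad : ∀ x, HasGradientAt f (f' x) x)
    (hstrong : ConvexOn ℝ Set.univ (fun x => f x - μ / 2 * ‖x‖ ^ 2))
    (hlip : ∀ x y, ‖f' x - f' y‖ ≤ L * ‖x - y‖)
    (d : EuclideanSpace ℝ (Fin pdim) → ℝ) (hd : ∀ x, d x ≤ f x)
    (z : EuclideanSpace ℝ (Fin pdim)) :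
    ∀ x, (1 - δ) * d x +
        δ * (f z + ⟪f' z, x - z⟫ + μ / 2 * ‖x - z‖ ^ 2) ≥
      d x - δ * (L - μ) / 2 * ‖x - z‖ ^ 2 := by
  intro x
  -- descent lemma: f x ≤ f z + ⟪f' z, x - z⟫ + L/2 ‖x-z‖²
  set v := x - z with hv
  set φ : ℝ → ℝ := fun t => f (z + t • v) - t * ⟪f' z, v⟫ - L * t ^ 2 / 2 * ‖v‖ ^ 2 with hφ
  have hline : ∀ t : ℝ, HasDerivAt (fun t : ℝ => z + t • v) v t := by
    intro t
    simpa using ((hasDerivAt_id t).smul_const v).const_add z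
  have hφ' : ∀ t : ℝ, HasDerivAt φ (⟪f' (z + t • v), v⟫ - ⟪f' z, v⟫ - L * t * ‖v‖ ^ 2) t := by
    intro t
    have h1 : HasDerivAt (fun t : ℝ => f (z + t • v)) ⟪f' (z + t • v), v⟫ t := by
      have := ((hgrad (z + t • v)).hasFDerivAt).comp_hasDerivAt t (hline t)
      exact this
    have h2 : HasDerivAt (fun t : ℝ => t * ⟪f' z, v⟫) ⟪f' z, v⟫ t := by
      simpa using (hasDerivAt_id t).mul_const ⟪f' z, v⟫
    have h3 : HasDerivAt (fun t : ℝ => L * t ^ 2 / 2 * ‖v‖ ^ 2) (L * t * ‖v‖ ^ 2) t := by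
      have : HasDerivAt (fun t : ℝ => t ^ 2) (2 * t) t := by
        simpa using hasDerivAt_pow 2 t
      have := ((this.const_mul L).div_const 2).mul_const (‖v‖ ^ 2)
      exact this.congr_deriv (by ring)
    exact (h1.sub h2).sub h3
  have hanti : AntitoneOn φ (Set.Icc (0:ℝ) 1) := by
    apply antitoneOn_of_deriv_nonpos (convex_Icc 0 1)
    · exact fun t _ => ((hφ' t).continuousAt).continuousWithinAt
    · exact fun t _ => ((hφ' t).differentiableAt).differentiableWithinAt
    · intro t ht
      rw [interior_Icc] at ht
      rw [(hφ' t).deriv]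
      have h1 : ⟪f' (z + t • v) - f' z, v⟫ ≤ ‖f' (z + t • v) - f' z‖ * ‖v‖ :=
        real_inner_le_norm _ _
      have h2 : ‖f' (z + t • v) - f' z‖ ≤ L * (t * ‖v‖) := by
        have := hlip (z + t • v) z
        simpa [norm_smul, abs_of_pos ht.1, mul_assoc] using this
      have h3 : ⟪f' (z + t • v) - f' z, v⟫ = ⟪f' (z + t • v), v⟫ - ⟪f' z, v⟫ :=
        inner_sub_left _ _ _
      nlinarith [norm_nonneg v, mul_le_mul_of_nonneg_right h2 (norm_nonneg v)]
  have hkey : φ 1 ≤ φ 0 := hanti (by norm_num) (by norm_num) (by norm_num)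
  have hx1 : z + (1:ℝ) • v = x := by simp [hv]
  have h0 : φ 0 = f z := by
    show f (z + (0:ℝ) • v) - 0 * ⟪f' z, v⟫ - L * (0:ℝ) ^ 2 / 2 * ‖v‖ ^ 2 = f z
    simp
  have h1 : φ 1 = f x - ⟪f' z, v⟫ - L / 2 * ‖v‖ ^ 2 := by
    show f (z + (1:ℝ) • v) - 1 * ⟪f' z, v⟫ - L * (1:ℝ) ^ 2 / 2 * ‖v‖ ^ 2 = _
    rw [hx1]; ring
  have hdescent : f x ≤ f z + ⟪f' z, v⟫ + L / 2 * ‖v‖ ^ 2 := by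
    rw [h0, h1] at hkey
    linarith
  have hdx := hd x
  obtain ⟨hδ0, hδ1⟩ := hδ
  nlinarith [sq_nonneg ‖v‖]
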